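/- arXiv:1604.04121 — 2 statements merged into one kernel-verified Lean document; each statement's English description precedes it below -/
import Mathlib

section
/- Let m ≥ 1 and let ζ ∈ ℂ be a primitive m-th root of unity. Let σ be the ℂ-algebra automorphism of the polynomial ring ℂ[x, y] determined by σ(x) = ζ·x and σ(y) = ζ⁻¹·y. Then the invariant subalgebra ℂ[x,y]^σ is generated as a ℂ-algebra by x^m, x·y and y^m; moreover, the ℂ-algebra homomorphism ℂ[X, Y, Z] → ℂ[x, y] sending X ↦ x^m, Y ↦ y^m, Z ↦ x·y has image equal to ℂ[x,y]^σ and kernel equal to the principal ideal generated by X·Y − Z^m. -/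
open MvPolynomial

/-- Monomial in two variables as product of powers. -/
lemma aux_mon2 (d : Fin 2 →₀ ℕ) :
    (monomial d (1:ℂ) : MvPolynomial (Fin 2) ℂ) = X 0 ^ d 0 * X 1 ^ d 1 := by
  rw [monomial_eq, C_1, one_mul, Finsupp.prod_fintype _ _ (fun i => pow_zero _),
    Fin.prod_univ_two]

/-- Monomial in three variables as product of powers. -/
lemma aux_mon3 (d : Fin 3 →₀ ℕ) :
    (monomial d (1:ℂ) : MvPolynomial (Fin 3) ℂ) = X 0 ^ d 0 * X 1 ^ d 1 * X 2 ^ d 2 := by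
  rw [monomial_eq, C_1, one_mul, Finsupp.prod_fintype _ _ (fun i => pow_zero _),
    Fin.prod_univ_three]

/-- The linear retraction used to prove injectivity on reduced polynomials. -/
noncomputable def theta (m : ℕ) : MvPolynomial (Fin 2) ℂ →ₗ[ℂ] MvPolynomial (Fin 3) ℂ :=
  (basisMonomials (Fin 2) ℂ).constr ℂ fun d =>
    if d 1 ≤ d 0 then X 0 ^ ((d 0 - d 1)/m) * X 2 ^ d 1
    else X 1 ^ ((d 1 - d 0)/m) * X 2 ^ d 0

lemma theta_monomial (m : ℕ) (d : Fin 2 →₀ ℕ) : theta m (monomial d 1) =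
    if d 1 ≤ d 0 then X 0 ^ ((d 0 - d 1)/m) * X 2 ^ d 1
    else X 1 ^ ((d 1 - d 0)/m) * X 2 ^ d 0 := by
  have : (monomial d (1:ℂ)) = basisMonomials (Fin 2) ℂ d := by
    rw [coe_basisMonomials]
  rw [this, theta, Module.Basis.constr_basis]

lemma theta_pow (m i j : ℕ) : theta m ((X 0:MvPolynomial (Fin 2) ℂ)^i * X 1^j) =
    if j ≤ i then X 0 ^ ((i - j)/m) * X 2 ^ j
    else X 1 ^ ((j - i)/m) * X 2 ^ i := by
  rw [X_pow_eq_monomial, X_pow_eq_monomial, monomial_mul, one_mul, theta_monomial]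
  simp [Finsupp.single_apply]

/-- Value of `ψ` on the reduced monomial `X^a Z^c`. -/
lemma psi_XZ (m a c : ℕ) :
    aeval ![X 0 ^ m, X 1 ^ m, X 0 * X 1] ((X 0:MvPolynomial (Fin 3) ℂ)^a * X 2^c)
      = (X 0:MvPolynomial (Fin 2) ℂ) ^ (m*a + c) * X 1 ^ c := by
  rw [map_mul, map_pow, map_pow, aeval_X, aeval_X]
  simp only [Matrix.cons_val_zero, Matrix.cons_val_two, Matrix.tail_cons, Matrix.head_cons]
  rw [← pow_mul, mul_pow, pow_add]
  ring

/-- Value of `ψ` on the reduced monomial `Y^b Z^c`. -/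
lemma psi_YZ (m b c : ℕ) :
    aeval ![X 0 ^ m, X 1 ^ m, X 0 * X 1] ((X 1:MvPolynomial (Fin 3) ℂ)^b * X 2^c)
      = (X 0:MvPolynomial (Fin 2) ℂ) ^ c * X 1 ^ (m*b + c) := by
  rw [map_mul, map_pow, map_pow, aeval_X, aeval_X]
  simp only [Matrix.cons_val_one, Matrix.head_cons, Matrix.cons_val_two, Matrix.tail_cons,
    Matrix.cons_val_zero]
  rw [← pow_mul, mul_pow, pow_add]
  ring

lemma theta_psi_XZ {m : ℕ} (hm : 1 ≤ m) (a c : ℕ) :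
    theta m ((X 0:MvPolynomial (Fin 2) ℂ) ^ (m*a + c) * X 1 ^ c)
      = (X 0:MvPolynomial (Fin 3) ℂ)^a * X 2^c := by
  rw [theta_pow, if_pos (Nat.le_add_left c (m*a))]
  rw [Nat.add_sub_cancel, Nat.mul_div_cancel_left a hm]

lemma theta_psi_YZ {m : ℕ} (hm : 1 ≤ m) (b c : ℕ) :
    theta m ((X 0:MvPolynomial (Fin 2) ℂ) ^ c * X 1 ^ (m*b + c))
      = (X 1:MvPolynomial (Fin 3) ℂ)^b * X 2^c := by
  rcases Nat.eq_zero_or_pos b with hb | hb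
  · subst hb
    rw [theta_pow]
    simp
  · have hlt : ¬ (m*b + c ≤ c) := by
      have : 0 < m * b := Nat.mul_pos hm hb
      omega
    rw [theta_pow, if_neg hlt, Nat.add_sub_cancel, Nat.mul_div_cancel_left b hm]

/-- The set of reduced monomials. -/
def Sred : Set (MvPolynomial (Fin 3) ℂ) :=
  {p | (∃ a c, p = X 0 ^ a * X 2 ^ c) ∨ (∃ b c, p = X 1 ^ b * X 2 ^ c)}

/-- `θ ∘ ψ = id` on the span of reduced monomials. -/
lemma theta_section {m : ℕ} (hm : 1 ≤ m) :
    ∀ r ∈ Submodule.span ℂ Sred,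
      theta m (aeval ![X 0 ^ m, X 1 ^ m, X 0 * X 1] r) = r := by
  intro r hr
  induction hr using Submodule.span_induction with
  | mem p hp =>
    rcases hp with ⟨a, c, rfl⟩ | ⟨b, c, rfl⟩
    · rw [psi_XZ, theta_psi_XZ hm]
    · rw [psi_YZ, theta_psi_YZ hm]
  | zero => simp
  | add p q _ _ hp hq => rw [map_add, map_add, hp, hq]
  | smul a p _ hp =>
    rw [map_smul, map_smul, hp]

/-- Reduction modulo `XY - Z^m`: every monomial is congruent to a reduced polynomial. -/
lemma red_mono (m : ℕ) : ∀ a b c : ℕ,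
    (X 0:MvPolynomial (Fin 3) ℂ)^a * X 1^b * X 2^c ∈
      Submodule.span ℂ Sred ⊔
        (Ideal.span {(X 0:MvPolynomial (Fin 3) ℂ) * X 1 - X 2 ^ m}).restrictScalars ℂ := by
  intro a
  induction a with
  | zero =>
    intro b c
    apply Submodule.mem_sup_left
    apply Submodule.subset_span
    right
    exact ⟨b, c, by rw [pow_zero, one_mul]⟩
  | succ a ih =>
    intro b c
    cases b with
    | zero =>
      apply Submodule.mem_sup_left
      apply Submodule.subset_span
      left
      exact ⟨a + 1, c, by rw [pow_zero, mul_one]⟩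
    | succ b =>
      have key : (X 0:MvPolynomial (Fin 3) ℂ)^(a+1) * X 1^(b+1) * X 2^c
          = (X 0 * X 1 - X 2 ^ m) * (X 0^a * X 1^b * X 2^c)
            + X 0^a * X 1^b * X 2^(c+m) := by
        rw [pow_succ, pow_succ, pow_add]
        ring
      rw [key]
      refine add_mem ?_ (ih b (c + m))
      apply Submodule.mem_sup_right
      show _ ∈ Ideal.span _
      rw [Ideal.mem_span_singleton]
      exact Dvd.intro _ rfl

/-- Every polynomial decomposes into a reduced part plus an element of the ideal. -/
lemma red_all (m : ℕ) (f : MvPolynomial (Fin 3) ℂ) :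
    f ∈ Submodule.span ℂ Sred ⊔
        (Ideal.span {(X 0:MvPolynomial (Fin 3) ℂ) * X 1 - X 2 ^ m}).restrictScalars ℂ := by
  rw [f.as_sum]
  refine Submodule.sum_mem _ fun v _ => ?_
  have : (monomial v (coeff v f) : MvPolynomial (Fin 3) ℂ)
      = coeff v f • (X 0 ^ v 0 * X 1 ^ v 1 * X 2 ^ v 2) := by
    rw [← aux_mon3, smul_monomial, smul_eq_mul, mul_one]
  rw [this]
  exact Submodule.smul_mem _ _ (red_mono m (v 0) (v 1) (v 2))

/-- Let `ζ` be a primitive `m`-th root of unity and `σ` the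
`ℂ`-algebra endomorphism of `ℂ[x,y]` with `σ x = ζ x`, `σ y = ζ⁻¹ y`.  Then the
invariant subalgebra `ℂ[x,y]^σ` is generated by `x^m`, `x*y` and `y^m`; moreover
the `ℂ`-algebra homomorphism `ℂ[X,Y,Z] → ℂ[x,y]` with `X ↦ x^m`, `Y ↦ y^m`,
`Z ↦ x*y` has image the invariant subalgebra and kernel the principal ideal
generated by `X*Y - Z^m`. -/
theorem invariants_of_cyclic_action_Am_singularity
    (m : ℕ) (hm : 1 ≤ m) (ζ : ℂ) (hζ : IsPrimitiveRoot ζ m)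
    (σ : MvPolynomial (Fin 2) ℂ →ₐ[ℂ] MvPolynomial (Fin 2) ℂ)
    (hσx : σ (X 0) = C ζ * X 0) (hσy : σ (X 1) = C ζ⁻¹ * X 1)
    (ψ : MvPolynomial (Fin 3) ℂ →ₐ[ℂ] MvPolynomial (Fin 2) ℂ)
    (hψ : ψ = aeval ![X 0 ^ m, X 1 ^ m, X 0 * X 1]) :
    (∀ f : MvPolynomial (Fin 2) ℂ,
        σ f = f ↔ f ∈ Algebra.adjoin ℂ {X 0 ^ m, X 0 * X 1, X 1 ^ m}) ∧
    (∀ f : MvPolynomial (Fin 2) ℂ, f ∈ ψ.range ↔ σ f = f) ∧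
    RingHom.ker ψ = Ideal.span {X 0 * X 1 - X 2 ^ m} := by
  have hm0 : m ≠ 0 := by omega
  have hζ0 : ζ ≠ 0 := hζ.ne_zero hm0
  have hζm : ζ ^ m = 1 := hζ.pow_eq_one
  -- the three generators are fixed by σ
  have hfix1 : σ (X 0 ^ m) = X 0 ^ m := by
    rw [map_pow, hσx, mul_pow, ← C_pow, hζm, C_1, one_mul]
  have hfix2 : σ (X 0 * X 1) = X 0 * X 1 := by
    rw [map_mul, hσx, hσy, mul_mul_mul_comm, ← C_mul, mul_inv_cancel₀ hζ0, C_1, one_mul]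
  have hfix3 : σ (X 1 ^ m) = X 1 ^ m := by
    rw [map_pow, hσy, mul_pow, ← C_pow, inv_pow, hζm, inv_one, C_1, one_mul]
  -- σ on monomials
  have hσmon : ∀ (d : Fin 2 →₀ ℕ) (r : ℂ),
      σ (monomial d r) = monomial d (ζ ^ d 0 * ζ⁻¹ ^ d 1 * r) := by
    intro d r
    have hCr : σ (C r) = C r := by
      simpa [algebraMap_eq] using σ.commutes r
    calc σ (monomial d r) = σ (C r * (X 0 ^ d 0 * X 1 ^ d 1)) := by
          rw [← aux_mon2, C_mul_monomial, mul_one]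
      _ = C r * ((C ζ * X 0) ^ d 0 * ((C ζ⁻¹) * X 1) ^ d 1) := by
          rw [map_mul, map_mul, map_pow, map_pow, hCr, hσx, hσy]
      _ = C (ζ ^ d 0 * ζ⁻¹ ^ d 1 * r) * (X 0 ^ d 0 * X 1 ^ d 1) := by
          rw [mul_pow, mul_pow, ← C_pow, ← C_pow, C_mul, C_mul]
          ring
      _ = monomial d (ζ ^ d 0 * ζ⁻¹ ^ d 1 * r) := by
          rw [← aux_mon2, C_mul_monomial, mul_one]
  -- invariant monomials lie in the adjoin
  have hmono_adj : ∀ d : Fin 2 →₀ ℕ, ζ ^ d 0 = ζ ^ d 1 →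
      (monomial d (1:ℂ) : MvPolynomial (Fin 2) ℂ) ∈
        Algebra.adjoin ℂ {X 0 ^ m, X 0 * X 1, X 1 ^ m} := by
    intro d hd
    have h0 : (X 0:MvPolynomial (Fin 2) ℂ) ^ m ∈
        Algebra.adjoin ℂ {X 0 ^ m, X 0 * X 1, X 1 ^ m} :=
      Algebra.subset_adjoin (by simp)
    have h1 : (X 0:MvPolynomial (Fin 2) ℂ) * X 1 ∈
        Algebra.adjoin ℂ {X 0 ^ m, X 0 * X 1, X 1 ^ m} :=
      Algebra.subset_adjoin (by simp)
    have h2 : (X 1:MvPolynomial (Fin 2) ℂ) ^ m ∈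
        Algebra.adjoin ℂ {X 0 ^ m, X 0 * X 1, X 1 ^ m} :=
      Algebra.subset_adjoin (by simp)
    rcases le_total (d 1) (d 0) with hle | hle
    · have h3 : ζ ^ (d 0 - d 1) = 1 := by
        have := hd
        rw [← Nat.sub_add_cancel hle, pow_add] at this
        exact mul_right_cancel₀ (pow_ne_zero _ hζ0) (by rw [one_mul]; exact this)
      obtain ⟨k, hk⟩ := hζ.dvd_of_pow_eq_one _ h3
      have hd0 : d 0 = d 1 + m * k := by omega
      have : (monomial d (1:ℂ) : MvPolynomial (Fin 2) ℂ)
          = ((X 0 ^ m) ^ k) * (X 0 * X 1) ^ (d 1) := by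
        rw [aux_mon2, hd0, ← pow_mul, mul_pow, pow_add]
        ring
      rw [this]
      exact mul_mem (pow_mem h0 k) (pow_mem h1 (d 1))
    · have h3 : ζ ^ (d 1 - d 0) = 1 := by
        have := hd.symm
        rw [← Nat.sub_add_cancel hle, pow_add] at this
        exact mul_right_cancel₀ (pow_ne_zero _ hζ0) (by rw [one_mul]; exact this)
      obtain ⟨k, hk⟩ := hζ.dvd_of_pow_eq_one _ h3
      have hd1 : d 1 = d 0 + m * k := by omega
      have : (monomial d (1:ℂ) : MvPolynomial (Fin 2) ℂ)
          = ((X 1 ^ m) ^ k) * (X 0 * X 1) ^ (d 0) := by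
        rw [aux_mon2, hd1, ← pow_mul, mul_pow, pow_add]
        ring
      rw [this]
      exact mul_mem (pow_mem h2 k) (pow_mem h1 (d 0))
  -- Part 1
  have part1 : ∀ f : MvPolynomial (Fin 2) ℂ,
      σ f = f ↔ f ∈ Algebra.adjoin ℂ {X 0 ^ m, X 0 * X 1, X 1 ^ m} := by
    intro f
    constructor
    · intro hf
      -- compute σ f monomial-wise
      have hσf : σ f = ∑ v ∈ f.support, monomial v (ζ ^ v 0 * ζ⁻¹ ^ v 1 * coeff v f) := by
        conv_lhs => rw [f.as_sum]
        rw [map_sum]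
        exact Finset.sum_congr rfl fun v _ => hσmon v (coeff v f)
      have hcoef : ∀ d ∈ f.support, ζ ^ d 0 * ζ⁻¹ ^ d 1 * coeff d f = coeff d f := by
        intro d hd
        have : coeff d (σ f) = coeff d f := by rw [hf]
        rw [hσf, coeff_sum] at this
        simpa [coeff_monomial, Finset.sum_ite_eq' f.support d, hd] using this
      rw [f.as_sum]
      refine Subalgebra.sum_mem _ fun d hd => ?_
      have hne : coeff d f ≠ 0 := mem_support_iff.mp hd
      have h1 : ζ ^ d 0 * ζ⁻¹ ^ d 1 = 1 :=
        mul_right_cancel₀ hne (by rw [one_mul]; exact hcoef d hd)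
      have h2 : ζ ^ d 0 = ζ ^ d 1 := by
        have := congrArg (· * ζ ^ d 1) h1
        simpa [mul_assoc, inv_pow, inv_mul_cancel₀ (pow_ne_zero (d 1) hζ0)] using this
      have : (monomial d (coeff d f) : MvPolynomial (Fin 2) ℂ)
          = coeff d f • monomial d 1 := by
        rw [smul_monomial, smul_eq_mul, mul_one]
      rw [this]
      exact Subalgebra.smul_mem _ (hmono_adj d h2) _
    · intro hf
      have : Algebra.adjoin ℂ {X 0 ^ m, X 0 * X 1, X 1 ^ m} ≤
          AlgHom.equalizer σ (AlgHom.id ℂ _) := by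
        apply Algebra.adjoin_le
        intro p hp
        rcases hp with rfl | rfl | rfl
        · exact hfix1
        · exact hfix2
        · exact hfix3
      exact this hf
  refine ⟨part1, ?_, ?_⟩
  -- Part 2
  · intro f
    constructor
    · rintro ⟨g, rfl⟩
      have : σ.comp ψ = ψ := by
        apply algHom_ext
        intro i
        fin_cases i <;> simp [hψ]
        · rw [hσx, mul_pow, ← C_pow, hζm, C_1, one_mul]
        · rw [hσy, mul_pow, ← C_pow, inv_pow, hζm, inv_one, C_1, one_mul]
        · rw [hσx, hσy, mul_mul_mul_comm, ← C_mul, mul_inv_cancel₀ hζ0, C_1, one_mul]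
      calc σ (ψ g) = (σ.comp ψ) g := rfl
        _ = ψ g := by rw [this]
    · intro hf
      have hrange : Algebra.adjoin ℂ {(X 0:MvPolynomial (Fin 2) ℂ) ^ m, X 0 * X 1, X 1 ^ m}
          ≤ ψ.range := by
        apply Algebra.adjoin_le
        intro p hp
        rcases hp with rfl | rfl | rfl
        · exact ⟨X 0, by simp [hψ]⟩
        · exact ⟨X 2, by simp [hψ]⟩
        · exact ⟨X 1, by simp [hψ]⟩
      exact hrange ((part1 f).mp hf)
  -- Part 3
  · subst hψ
    apply le_antisymm
    · intro f hf
      have hker : ∀ i ∈ Ideal.span {(X 0:MvPolynomial (Fin 3) ℂ) * X 1 - X 2 ^ m},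
          aeval ![(X 0:MvPolynomial (Fin 2) ℂ) ^ m, X 1 ^ m, X 0 * X 1] i = 0 := by
        intro i hi
        rw [Ideal.mem_span_singleton] at hi
        obtain ⟨q, rfl⟩ := hi
        simp only [map_mul, map_sub, map_pow, aeval_X, Matrix.cons_val_zero,
          Matrix.cons_val_one, Matrix.head_cons, Matrix.cons_val_two, Matrix.tail_cons]
        rw [mul_pow, sub_self, zero_mul]
      obtain ⟨r, hr, i, hi, hri⟩ := Submodule.mem_sup.mp (red_all m f)
      have hif : aeval ![(X 0:MvPolynomial (Fin 2) ℂ) ^ m, X 1 ^ m, X 0 * X 1] i = 0 :=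
        hker i hi
      have hrf : aeval ![(X 0:MvPolynomial (Fin 2) ℂ) ^ m, X 1 ^ m, X 0 * X 1] r = 0 := by
        have hf0 : aeval ![(X 0:MvPolynomial (Fin 2) ℂ) ^ m, X 1 ^ m, X 0 * X 1] f = 0 := hf
        rw [← hri, map_add, hif, add_zero] at hf0
        exact hf0
      have hr0 : r = 0 := by
        have := theta_section hm r hr
        rw [hrf, map_zero] at this
        exact this.symm
      rw [← hri, hr0, zero_add]
      exact hi
    · rw [Ideal.span_le]
      intro p hp
      rw [Set.mem_singleton_iff] at hp
      subst hp
      rw [SetLike.mem_coe, RingHom.mem_ker]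
      simp only [map_sub, map_mul, map_pow, aeval_X, Matrix.cons_val_zero,
        Matrix.cons_val_one, Matrix.head_cons, Matrix.cons_val_two, Matrix.tail_cons]
      rw [mul_pow, sub_self]
end

section
/- Let V be a finite-dimensional complex vector space with a nondegenerate alternating bilinear form ω₀, and let sp(V, ω₀) denote the Lie algebra of ω₀-skew endomorphisms of V. Then a pair (v, φ) ∈ V × V* satisfies φ(Av) = 0 for all A ∈ sp(V, ω₀) if and only if v = 0 or φ = 0. In other words, the null-fibre of the moment map of the symplectic double of the standard representation of sp(V, ω₀) equals (V × {0}) ∪ ({0} × V*). -/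
/-- Let `V` be a finite-dimensional complex vector space with a
nondegenerate alternating bilinear form `ω₀`.  A pair `(v, φ) ∈ V × V*`
satisfies `φ (A v) = 0` for all `A ∈ sp(V, ω₀)` if and only if `v = 0` or
`φ = 0`; i.e. the null-fibre of the moment map of the symplectic double of the
standard representation of `sp(V, ω₀)` is `(V × {0}) ∪ ({0} × V*)`. -/
theorem null_fibre_of_standard_symplectic_representation
    {V : Type*} [AddCommGroup V] [Module ℂ V] [FiniteDimensional ℂ V]
    (ω₀ : V →ₗ[ℂ] V →ₗ[ℂ] ℂ) (hAlt : ∀ x, ω₀ x x = 0)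
    (hnd : ∀ m, (∀ n, ω₀ m n = 0) → m = 0)
    (v : V) (φ : Module.Dual ℂ V) :
    (∀ A : V →ₗ[ℂ] V, (∀ x y, ω₀ (A x) y = - ω₀ x (A y)) → φ (A v) = 0) ↔
      (v = 0 ∨ φ = 0) := by
  have hskewsym : ∀ x y, ω₀ x y = - ω₀ y x := by
    intro x y
    have h := hAlt (x + y)
    simp only [map_add, LinearMap.add_apply, hAlt] at h
    linear_combination h
  constructor
  · intro h
    by_cases hv : v = 0
    · exact Or.inl hv
    · right
      -- get u with ω₀ u v ≠ 0
      obtain ⟨u, hu⟩ : ∃ u, ω₀ u v ≠ 0 := by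
        by_contra hc
        push_neg at hc
        apply hv
        apply hnd
        intro n
        rw [hskewsym, hc n, neg_zero]
      -- key: for all u w, ω₀ u v * φ w + ω₀ w v * φ u = 0
      have key : ∀ u w : V, ω₀ u v * φ w + ω₀ w v * φ u = 0 := by
        intro u w
        have hA := h ((ω₀ u).smulRight w + (ω₀ w).smulRight u) ?_
        · simpa [smul_eq_mul, mul_comm] using hA
        · intro x y
          simp only [LinearMap.add_apply, LinearMap.smulRight_apply, map_add,
            map_smul, LinearMap.smul_apply, smul_eq_mul]
          rw [hskewsym x w, hskewsym x u]
          ring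
      have hφu : φ u = 0 := by
        have := key u u
        have h2 : (2 : ℂ) * (ω₀ u v * φ u) = 0 := by linear_combination this
        rcases mul_eq_zero.mp h2 with h | h
        · norm_num at h
        · exact (mul_eq_zero.mp h).resolve_left hu
      ext w
      have := key u w
      rw [hφu, mul_zero, add_zero] at this
      simpa using (mul_eq_zero.mp this).resolve_left hu
  · rintro (rfl | rfl) A hA
    · simp
    · simp
end
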